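/- arXiv:2603.17636 — 3 statements merged into one kernel-verified Lean document; each statement's English description precedes it below -/
import Mathlib

section
/- Let q be a prime power, let m, k, s be positive integers with gcd(s,m)=1, and let S, T be F_q-subspaces of F_{q^m} with dim_{F_q}(S) = dim_{F_q}(T) > k. Then the Gabidulin systems G_{k,s,m}[S] and G_{k,s,m}[T] are equivalent as q-systems if and only if there exists a nonzero element α of F_{q^m} such that T = αS (that is, T = {α x : x ∈ S}). -/
open Pointwise

/-- The Gabidulin system `G_{k,s,m}[S] = {(x, x^{q^s}, …, x^{q^{s(k-1)}}) : x ∈ S}`,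
as a subset of `(F_{q^m})^k`. -/
def gabSys (q s k : ℕ) {L : Type*} [Field L] (S : Set L) : Set (Fin k → L) :=
  (fun x : L => fun i : Fin k => x ^ q ^ (s * (i : ℕ))) '' S

/-- Two subsets of `(F_{q^m})^k` are equivalent as q-systems if some `F_{q^m}`-linear
automorphism of `(F_{q^m})^k` maps one onto the other. -/
def qSysEquiv {L : Type*} [Field L] {k : ℕ} (U V : Set (Fin k → L)) : Prop :=
  ∃ A : (Fin k → L) ≃ₗ[L] (Fin k → L), A '' U = V

open Finset


section Aux

variable {K L : Type*} [Field K] [Fintype K] [Field L] [Fintype L] [Algebra K L]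

/-- subtraction version of the Frobenius additivity hypothesis -/
lemma gab_sub_pow {q : ℕ} (hfa : ∀ (n : ℕ) (x y : L), (x + y) ^ q ^ n = x ^ q ^ n + y ^ q ^ n)
    (n : ℕ) (x y : L) : (x - y) ^ q ^ n = x ^ q ^ n - y ^ q ^ n := by
  have h := hfa n (x - y) y
  rw [sub_add_cancel] at h
  rw [eq_sub_of_add_eq h.symm]

lemma gab_sum_pow {q : ℕ} (hq0 : q ≠ 0)
    (hfa : ∀ (n : ℕ) (x y : L), (x + y) ^ q ^ n = x ^ q ^ n + y ^ q ^ n)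
    {ι : Type*} (t : Finset ι) (f : ι → L) (n : ℕ) :
    (∑ i ∈ t, f i) ^ q ^ n = ∑ i ∈ t, (f i) ^ q ^ n := by
  classical
  induction t using Finset.cons_induction with
  | empty => simp [zero_pow (pow_ne_zero n hq0)]
  | cons a t ha ih => rw [Finset.sum_cons, Finset.sum_cons, hfa, ih]

/-- the fixed field of `x ↦ x^(q^s)` is the image of `K` when `gcd(s,m) = 1`. -/
lemma gab_fixed_field {q m s : ℕ} (hq2 : 2 ≤ q) (hm : 0 < m) (hs : 0 < s)
    (hsm : Nat.gcd s m = 1) (hcardK : Fintype.card K = q) (hcardL : Fintype.card L = q ^ m)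
    {x : L} (hx : x ^ q ^ s = x) : x ∈ Set.range (algebraMap K L) := by
  have hq0 : q ≠ 0 := by omega
  -- every element of L is fixed by q^m power
  have hLm : ∀ z : L, z ^ q ^ m = z := by
    intro z
    have := FiniteField.pow_card z
    rwa [hcardL] at this
  -- x^q = x
  have hxq : x ^ q = x := by
    have hiter : ∀ u : ℕ, x ^ q ^ (s * u) = x := by
      intro u
      induction u with
      | zero => simp
      | succ u ih =>
        have : s * (u + 1) = s * u + s := by ring
        rw [this, pow_add, pow_mul, ih, hx]
    have hshift : ∀ (a d : ℕ) (z : L), z ^ q ^ (a + d * m) = z ^ q ^ a := by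
      intro a d z
      induction d with
      | zero => simp
      | succ d ih =>
        have : a + (d + 1) * m = (a + d * m) + m := by ring
        rw [this, pow_add, pow_mul, hLm, ih]
    have hmod : ∀ (t : ℕ) (z : L), z ^ q ^ t = z ^ q ^ (t % m) := by
      intro t z
      have h := hshift (t % m) (t / m) z
      rwa [Nat.mod_add_div'] at h
    rcases eq_or_lt_of_le (show 1 ≤ m from hm) with hm1 | hm2
    · -- m = 1
      subst hm1
      simpa using hLm x
    · -- m ≥ 2
      have htot : 1 ≤ Nat.totient m := Nat.totient_pos.mpr hm
      set u : ℕ := s ^ (Nat.totient m - 1) with hu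
      have hsu : s * u = s ^ Nat.totient m := by
        rw [hu, ← pow_succ']
        congr 1
        omega
      have hcop : Nat.Coprime s m := hsm
      have hmodeq : s ^ Nat.totient m % m = 1 % m := Nat.ModEq.pow_totient hcop
      have h1m : (1 : ℕ) % m = 1 := Nat.mod_eq_of_lt hm2
      have : x ^ q ^ (s * u) = x := hiter u
      rw [hmod (s * u) x, hsu, hmodeq, h1m, pow_one] at this
      exact this
  -- root counting
  classical
  set P : Polynomial L := Polynomial.X ^ q - Polynomial.X with hP
  have hPne : P ≠ 0 := by
    intro h
    have hc : P.coeff q = 1 := by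
      rw [hP, Polynomial.coeff_sub, Polynomial.coeff_X_pow, Polynomial.coeff_X, if_pos rfl,
        if_neg (by omega)]
      ring
    rw [h] at hc
    simp at hc
  have hdeg : P.natDegree ≤ q := by
    have h1 := Polynomial.natDegree_sub_le (Polynomial.X ^ q : Polynomial L) Polynomial.X
    rw [Polynomial.natDegree_X_pow, Polynomial.natDegree_X, ← hP] at h1
    exact h1.trans (max_le le_rfl (by omega))
  have hroot : ∀ z : L, z ^ q = z → z ∈ P.roots.toFinset := by
    intro z hz
    rw [Multiset.mem_toFinset, Polynomial.mem_roots hPne]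
    simp [hP, Polynomial.IsRoot, hz]
  set Fr : Finset L := Finset.univ.image (algebraMap K L) with hFr
  have hFrcard : Fr.card = q := by
    rw [hFr, Finset.card_image_of_injective _ (algebraMap K L).injective, Finset.card_univ,
      hcardK]
  have hFrsub : Fr ⊆ P.roots.toFinset := by
    intro z hz
    rw [hFr, Finset.mem_image] at hz
    obtain ⟨c, -, rfl⟩ := hz
    apply hroot
    rw [← map_pow]
    congr 1
    have := FiniteField.pow_card c
    rwa [hcardK] at this
  have hcardle : P.roots.toFinset.card ≤ Fr.card := by
    rw [hFrcard]
    exact le_trans (Multiset.toFinset_card_le _) (le_trans (Polynomial.card_roots' P) hdeg)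
  have heq : Fr = P.roots.toFinset := Finset.eq_of_subset_of_card_le hFrsub hcardle
  have hxr : x ∈ P.roots.toFinset := hroot x hxq
  rw [← heq, hFr, Finset.mem_image] at hxr
  obtain ⟨c, -, hc⟩ := hxr
  exact ⟨c, hc⟩

end Aux

section Aux2

variable {K L : Type*} [Field K] [Fintype K] [Field L] [Fintype L] [Algebra K L]

/-- The `K`-linear map `x ↦ x^(q^s) - x` on `L`. -/
def Emap (K : Type*) {L : Type*} [Field K] [Fintype K] [Field L] [Algebra K L] (q s : ℕ)
    (hfa : ∀ (n : ℕ) (x y : L), (x + y) ^ q ^ n = x ^ q ^ n + y ^ q ^ n)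
    (hcK : ∀ (c : K) (n : ℕ), c ^ q ^ n = c) : L →ₗ[K] L where
  toFun z := z ^ q ^ s - z
  map_add' x y := by rw [hfa]; ring
  map_smul' c x := by
    simp only [RingHom.id_apply, Algebra.smul_def, mul_pow, ← map_pow, hcK c s]
    ring

lemma Emap_apply (q s : ℕ)
    (hfa : ∀ (n : ℕ) (x y : L), (x + y) ^ q ^ n = x ^ q ^ n + y ^ q ^ n)
    (hcK : ∀ (c : K) (n : ℕ), c ^ q ^ n = c) (z : L) :
    Emap K q s hfa hcK z = z ^ q ^ s - z := rfl

lemma ker_Emap {q m s : ℕ} (hq2 : 2 ≤ q) (hm : 0 < m) (hs : 0 < s)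
    (hsm : Nat.gcd s m = 1) (hcardK : Fintype.card K = q) (hcardL : Fintype.card L = q ^ m)
    (hfa : ∀ (n : ℕ) (x y : L), (x + y) ^ q ^ n = x ^ q ^ n + y ^ q ^ n)
    (hcK : ∀ (c : K) (n : ℕ), c ^ q ^ n = c) :
    LinearMap.ker (Emap K q s hfa hcK) = (K ∙ (1 : L)) := by
  ext z
  rw [LinearMap.mem_ker, Emap_apply, sub_eq_zero, Submodule.mem_span_singleton]
  constructor
  · intro hz
    obtain ⟨c, hc⟩ := gab_fixed_field hq2 hm hs hsm hcardK hcardL hz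
    exact ⟨c, by rw [← hc, Algebra.algebraMap_eq_smul_one]⟩
  · rintro ⟨c, rfl⟩
    rw [← Algebra.algebraMap_eq_smul_one, ← map_pow, hcK c s]

lemma finrank_map_Emap {q m s : ℕ} (hq2 : 2 ≤ q) (hm : 0 < m) (hs : 0 < s)
    (hsm : Nat.gcd s m = 1) (hcardK : Fintype.card K = q) (hcardL : Fintype.card L = q ^ m)
    (hfa : ∀ (n : ℕ) (x y : L), (x + y) ^ q ^ n = x ^ q ^ n + y ^ q ^ n)
    (hcK : ∀ (c : K) (n : ℕ), c ^ q ^ n = c) (S : Submodule K L) :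
    Module.finrank K S ≤ Module.finrank K (S.map (Emap K q s hfa hcK)) + 1 := by
  set E := Emap K q s hfa hcK with hE
  set f : S →ₗ[K] L := E.comp S.subtype with hf
  have hrange : LinearMap.range f = S.map E := by
    rw [hf, LinearMap.range_comp, Submodule.range_subtype]
  have hrn : Module.finrank K (LinearMap.range f) + Module.finrank K (LinearMap.ker f)
      = Module.finrank K S := LinearMap.finrank_range_add_finrank_ker f
  have hkerle : Module.finrank K (LinearMap.ker f) ≤ 1 := by
    let g : LinearMap.ker f →ₗ[K] LinearMap.ker E :=
      LinearMap.codRestrict (LinearMap.ker E) (S.subtype.comp (LinearMap.ker f).subtype)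
        (by
          rintro ⟨⟨x, hxS⟩, hxk⟩
          have : f ⟨x, hxS⟩ = 0 := hxk
          simpa [hf] using this)
    have hginj : Function.Injective g := by
      intro a b hab
      apply Subtype.ext
      apply Subtype.ext
      have := congrArg (Subtype.val) hab
      simpa [g] using this
    have := LinearMap.finrank_le_finrank_of_injective hginj
    calc Module.finrank K (LinearMap.ker f) ≤ Module.finrank K (LinearMap.ker E) := this
      _ ≤ 1 := by
          rw [ker_Emap hq2 hm hs hsm hcardK hcardL hfa hcK]
          rw [finrank_span_singleton (one_ne_zero : (1 : L) ≠ 0)]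
  rw [← hrn, hrange]
  omega

end Aux2

section Aux3

variable {K L : Type*} [Field K] [Fintype K] [Field L] [Fintype L] [Algebra K L]

lemma gab_telescope {q s : ℕ} (hq0 : q ≠ 0)
    (hfa : ∀ (n : ℕ) (x y : L), (x + y) ^ q ^ n = x ^ q ^ n + y ^ q ^ n)
    (N : ℕ) (b : ℕ → L) (x : L) :
    ∑ i ∈ Finset.range (N + 1), b i * x ^ q ^ (s * i)
      = (∑ t ∈ Finset.range N, (∑ i ∈ Finset.Ioc t N, b i) * (x ^ q ^ s - x) ^ q ^ (s * t))
        + (∑ i ∈ Finset.range (N + 1), b i) * x := by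
  have hsub : ∀ t : ℕ, (x ^ q ^ s - x) ^ q ^ (s * t)
      = x ^ q ^ (s * (t + 1)) - x ^ q ^ (s * t) := by
    intro t
    rw [gab_sub_pow hfa, ← pow_mul, ← pow_add]
    congr 2
    ring
  calc
    ∑ i ∈ Finset.range (N + 1), b i * x ^ q ^ (s * i)
        = ∑ i ∈ Finset.range (N + 1), (b i * (x ^ q ^ (s * i) - x) + b i * x) := by
          apply Finset.sum_congr rfl; intro i _; ring
    _ = (∑ i ∈ Finset.range (N + 1), b i * (x ^ q ^ (s * i) - x))
          + (∑ i ∈ Finset.range (N + 1), b i) * x := by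
          rw [Finset.sum_add_distrib, Finset.sum_mul]
    _ = (∑ t ∈ Finset.range N, (∑ i ∈ Finset.Ioc t N, b i) * (x ^ q ^ s - x) ^ q ^ (s * t))
          + (∑ i ∈ Finset.range (N + 1), b i) * x := by
          congr 1
          have hswap : ∑ t ∈ Finset.range N, ∑ i ∈ Finset.Ioc t N,
              b i * (x ^ q ^ (s * (t + 1)) - x ^ q ^ (s * t))
              = ∑ i ∈ Finset.range (N + 1), ∑ t ∈ Finset.range i,
              b i * (x ^ q ^ (s * (t + 1)) - x ^ q ^ (s * t)) := by
            apply Finset.sum_comm'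
            intro t i
            simp only [Finset.mem_range, Finset.mem_Ioc]
            omega
          calc
            ∑ i ∈ Finset.range (N + 1), b i * (x ^ q ^ (s * i) - x)
                = ∑ i ∈ Finset.range (N + 1), ∑ t ∈ Finset.range i,
                    b i * (x ^ q ^ (s * (t + 1)) - x ^ q ^ (s * t)) := by
                  apply Finset.sum_congr rfl
                  intro i _
                  rw [← Finset.mul_sum]
                  congr 1
                  have h2 := Finset.sum_range_sub (fun t => x ^ q ^ (s * t)) i
                  simp only [Nat.mul_zero, pow_zero, pow_one] at h2
                  exact h2.symm
            _ = ∑ t ∈ Finset.range N, ∑ i ∈ Finset.Ioc t N,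
                    b i * (x ^ q ^ (s * (t + 1)) - x ^ q ^ (s * t)) := hswap.symm
            _ = ∑ t ∈ Finset.range N, (∑ i ∈ Finset.Ioc t N, b i)
                  * (x ^ q ^ s - x) ^ q ^ (s * t) := by
                  apply Finset.sum_congr rfl
                  intro t _
                  rw [hsub t, Finset.sum_mul]

lemma gab_keyVanish {q m s : ℕ} (hq2 : 2 ≤ q) (hm : 0 < m) (hs : 0 < s)
    (hsm : Nat.gcd s m = 1) (hcardK : Fintype.card K = q) (hcardL : Fintype.card L = q ^ m)
    (hfa : ∀ (n : ℕ) (x y : L), (x + y) ^ q ^ n = x ^ q ^ n + y ^ q ^ n)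
    (hcK : ∀ (c : K) (n : ℕ), c ^ q ^ n = c) :
    ∀ (n : ℕ) (c : ℕ → L) (S : Submodule K L), n < Module.finrank K S →
      (∀ x ∈ S, ∑ i ∈ Finset.range (n + 1), c i * x ^ q ^ (s * i) = 0) →
      ∀ i ≤ n, c i = 0 := by
  have hq0 : q ≠ 0 := by omega
  intro n
  induction n with
  | zero =>
    intro c S hlt hv i hi
    interval_cases i
    have hSne : S ≠ ⊥ := by
      intro h
      rw [h, finrank_bot] at hlt
      omega
    obtain ⟨x, hxS, hx0⟩ := Submodule.exists_mem_ne_zero_of_ne_bot hSne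
    have := hv x hxS
    rw [Finset.sum_range_one] at this
    simp only [Nat.mul_zero, pow_zero, pow_one] at this
    rcases mul_eq_zero.mp this with h | h
    · exact h
    · exact absurd h hx0
  | succ n IH =>
    intro c S hlt hv i hi
    have hSne : S ≠ ⊥ := by
      intro h
      rw [h, finrank_bot] at hlt
      omega
    obtain ⟨v, hvS, hv0⟩ := Submodule.exists_mem_ne_zero_of_ne_bot hSne
    have hvpow : ∀ e : ℕ, v ^ e ≠ 0 := fun e => pow_ne_zero e hv0
    -- the multiplication-by-v⁻¹ equivalence
    let μ : L ≃ₗ[K] L := LinearEquiv.ofLinear (LinearMap.mulLeft K v⁻¹) (LinearMap.mulLeft K v)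
      (by ext z; simp only [LinearMap.coe_comp, Function.comp_apply, LinearMap.mulLeft_apply,
            LinearMap.id_coe, id_eq]; rw [← mul_assoc, inv_mul_cancel₀ hv0, one_mul])
      (by ext z; simp only [LinearMap.coe_comp, Function.comp_apply, LinearMap.mulLeft_apply,
            LinearMap.id_coe, id_eq]; rw [← mul_assoc, mul_inv_cancel₀ hv0, one_mul])
    set S' : Submodule K L := S.map (μ : L →ₗ[K] L) with hS'
    have hrankS' : Module.finrank K S' = Module.finrank K S :=
      LinearEquiv.finrank_map_eq μ S
    have h1S' : (1 : L) ∈ S' := by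
      refine ⟨v, hvS, ?_⟩
      show v⁻¹ * v = 1
      exact inv_mul_cancel₀ hv0
    set b : ℕ → L := fun i => c i * v ^ q ^ (s * i) with hb
    have hvS' : ∀ y ∈ S', ∑ i ∈ Finset.range (n + 2), b i * y ^ q ^ (s * i) = 0 := by
      rintro y ⟨x, hxS, rfl⟩
      have : ∀ i : ℕ, b i * ((μ : L →ₗ[K] L) x) ^ q ^ (s * i) = c i * x ^ q ^ (s * i) := by
        intro i
        show c i * v ^ q ^ (s * i) * (v⁻¹ * x) ^ q ^ (s * i) = c i * x ^ q ^ (s * i)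
        rw [mul_pow, inv_pow]
        field_simp
      rw [Finset.sum_congr rfl (fun i _ => this i)]
      exact hv x hxS
    have hsum0 : ∑ i ∈ Finset.range (n + 2), b i = 0 := by
      have := hvS' 1 h1S'
      simpa using this
    set g : ℕ → L := fun t => ∑ i ∈ Finset.Ioc t (n + 1), b i with hg
    set E := Emap K q s hfa hcK with hE
    set S'' : Submodule K L := S'.map E with hS''
    have hvS'' : ∀ z ∈ S'', ∑ t ∈ Finset.range (n + 1), g t * z ^ q ^ (s * t) = 0 := by
      rintro z ⟨y, hyS', rfl⟩
      have hid := gab_telescope (s := s) hq0 hfa (n + 1) b y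
      rw [hvS' y hyS', hsum0, zero_mul, add_zero] at hid
      show ∑ t ∈ Finset.range (n + 1), g t * ((E : L →ₗ[K] L) y) ^ q ^ (s * t) = 0
      simp only [hg, hE, Emap_apply]
      exact hid.symm
    have hrank'' : n < Module.finrank K S'' := by
      have := finrank_map_Emap hq2 hm hs hsm hcardK hcardL hfa hcK S'
      rw [← hS''] at this
      omega
    have hgz : ∀ t ≤ n, g t = 0 := IH g S'' hrank'' hvS''
    have hgtop : g (n + 1) = 0 := by
      rw [hg]
      simp
    have hbz : ∀ j, 1 ≤ j → j ≤ n + 1 → b j = 0 := by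
      intro j hj1 hj2
      have hins : Finset.Ioc (j - 1) (n + 1) = insert j (Finset.Ioc j (n + 1)) := by
        ext t
        simp only [Finset.mem_Ioc, Finset.mem_insert]
        omega
      have hsum : g (j - 1) = b j + g j := by
        rw [hg]
        simp only []
        rw [hins, Finset.sum_insert (by simp)]
      have hgj1 : g (j - 1) = 0 := hgz (j - 1) (by omega)
      have hgj : g j = 0 := by
        rcases Nat.lt_or_ge j (n + 1) with h | h
        · exact hgz j (by omega)
        · have : j = n + 1 := by omega
          rw [this]; exact hgtop
      rw [hgj1, hgj, add_zero] at hsum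
      exact hsum.symm
    have hb0 : b 0 = 0 := by
      have hss := Finset.sum_range_succ' b (n + 1)
      rw [hsum0] at hss
      have : ∑ i ∈ Finset.range (n + 1), b (i + 1) = 0 := by
        apply Finset.sum_eq_zero
        intro j hj
        rw [Finset.mem_range] at hj
        exact hbz (j + 1) (by omega) (by omega)
      rw [this, zero_add] at hss
      exact hss.symm
    have hbi : b i = 0 := by
      rcases Nat.eq_zero_or_pos i with h | h
      · rw [h]; exact hb0
      · exact hbz i h hi
    rw [hb] at hbi
    simp only [] at hbi
    rcases mul_eq_zero.mp hbi with h | h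
    · exact h
    · exact absurd h (hvpow _)

end Aux3

section Aux4

variable {K L : Type*} [Field K] [Fintype K] [Field L] [Fintype L] [Algebra K L]

lemma gab_frob_add {q : ℕ} (hq : IsPrimePow q) (hcardK : Fintype.card K = q) :
    ∀ (n : ℕ) (x y : L), (x + y) ^ q ^ n = x ^ q ^ n + y ^ q ^ n := by
  obtain ⟨p, e, hp, he, hpe⟩ := hq
  have hpN : p.Prime := Nat.prime_iff.mpr hp
  -- char of K
  obtain ⟨n', hr, hcard⟩ := FiniteField.card K (ringChar K)
  have hpr : p = ringChar K := by
    have hdvd : p ∣ ringChar K ^ (n' : ℕ) := by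
      rw [← hcard, hcardK, ← hpe]
      exact dvd_pow_self p (by omega)
    have := hpN.dvd_of_dvd_pow hdvd
    exact (Nat.prime_dvd_prime_iff_eq hpN hr).mp this
  haveI : CharP K p := by rw [hpr]; infer_instance
  haveI : CharP L p := charP_of_injective_algebraMap (algebraMap K L).injective p
  haveI : Fact p.Prime := ⟨hpN⟩
  intro n x y
  have hqe : q ^ n = p ^ (e * n) := by rw [← hpe, ← pow_mul]
  rw [hqe]
  exact add_pow_char_pow x y p (e * n)

lemma gab_pow_K {q : ℕ} (hcardK : Fintype.card K = q) :
    ∀ (c : K) (n : ℕ), c ^ q ^ n = c := by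
  intro c n
  have := FiniteField.pow_card_pow n c
  rwa [hcardK] at this

end Aux4

/-- for `F_q`-subspaces `S, T ⊆ F_{q^m}` of the same dimension `> k`,
the Gabidulin systems `G_{k,s,m}[S]` and `G_{k,s,m}[T]` are equivalent as q-systems
iff `T = αS` for some nonzero `α ∈ F_{q^m}`. -/
theorem stmt0 (q m k s : ℕ) (hq : IsPrimePow q) (hm : 0 < m) (hk : 0 < k) (hs : 0 < s)
    (hsm : Nat.gcd s m = 1)
    (K L : Type*) [Field K] [Fintype K] [Field L] [Fintype L] [Algebra K L]
    (hcardK : Fintype.card K = q) (hrank : Module.finrank K L = m)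
    (S T : Submodule K L)
    (hdim : Module.finrank K S = Module.finrank K T)
    (hgt : k < Module.finrank K S) :
    qSysEquiv (gabSys q s k (S : Set L)) (gabSys q s k (T : Set L)) ↔
      ∃ α : L, α ≠ 0 ∧ (T : Set L) = α • (S : Set L) := by
  have hq2 : 2 ≤ q := hq.two_le
  have hq0 : q ≠ 0 := by omega
  have hcardL : Fintype.card L = q ^ m := by
    rw [← hcardK, ← hrank]
    exact Module.card_eq_pow_finrank
  have hfa : ∀ (n : ℕ) (x y : L), (x + y) ^ q ^ n = x ^ q ^ n + y ^ q ^ n :=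
    gab_frob_add hq hcardK
  have hcK : ∀ (c : K) (n : ℕ), c ^ q ^ n = c := gab_pow_K hcardK
  set gmap : L → (Fin k → L) := fun x (i : Fin k) => x ^ q ^ (s * (i : ℕ)) with hgmap
  have hgabS : gabSys q s k (S : Set L) = gmap '' (S : Set L) := rfl
  have hgabT : gabSys q s k (T : Set L) = gmap '' (T : Set L) := rfl
  constructor
  · rintro ⟨A, hA⟩
    rw [hgabS, hgabT] at hA
    set aF : Fin k → Fin k → L := fun j i => A (fun t => if i = t then 1 else 0) j with haF
    set a' : ℕ → ℕ → L := fun j i =>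
      if h : j < k ∧ i < k then aF ⟨j, h.1⟩ ⟨i, h.2⟩ else 0 with ha'
    have hAcoordN : ∀ (x : L) (j : ℕ) (hj : j < k),
        A (gmap x) ⟨j, hj⟩ = ∑ i ∈ Finset.range k, a' j i * x ^ q ^ (s * i) := by
      intro x j hj
      have h := congrFun
        (LinearMap.pi_apply_eq_sum_univ (A : (Fin k → L) →ₗ[L] (Fin k → L)) (gmap x))
        ⟨j, hj⟩
      rw [Finset.sum_apply] at h
      calc A (gmap x) ⟨j, hj⟩
          = ∑ i : Fin k, gmap x i •
              (A : (Fin k → L) →ₗ[L] (Fin k → L)) (fun t => if i = t then 1 else 0) ⟨j, hj⟩ :=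
            h
        _ = ∑ i ∈ Finset.range k, a' j i * x ^ q ^ (s * i) := by
            rw [← Fin.sum_univ_eq_sum_range (fun i => a' j i * x ^ q ^ (s * i)) k]
            apply Finset.sum_congr rfl
            intro i _
            have hai : a' j (i : ℕ) = aF ⟨j, hj⟩ i := by
              simp only [ha']
              rw [dif_pos ⟨hj, i.isLt⟩]
            rw [hai, smul_eq_mul, mul_comm]
            rfl
    have hgx : ∀ x ∈ (S : Set L), ∃ y, y ∈ (T : Set L) ∧ gmap y = A (gmap x) := by
      intro x hx
      have hmem : A (gmap x) ∈ gmap '' (T : Set L) := by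
        rw [← hA]
        exact Set.mem_image_of_mem _ ⟨x, hx, rfl⟩
      obtain ⟨y, hy, hy2⟩ := hmem
      exact ⟨y, hy, hy2⟩
    have hstep : ∀ (j i : ℕ), j + 1 < k → i + 1 ≤ k →
        a' (j + 1) (i + 1) = (a' j i) ^ q ^ s := by
      intro j i hj hik
      set cj : ℕ → L := fun i => a' (j + 1) i -
        (if i = 0 then 0 else (a' j (i - 1)) ^ q ^ s) with hcj
      have hrel : ∀ x ∈ S, ∑ i ∈ Finset.range k, a' (j + 1) i * x ^ q ^ (s * i)
          = (∑ i ∈ Finset.range k, a' j i * x ^ q ^ (s * i)) ^ q ^ s := by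
        intro x hx
        obtain ⟨y, hyT, hgy⟩ := hgx x hx
        have e1 : A (gmap x) ⟨j + 1, hj⟩ = y ^ q ^ (s * (j + 1)) := by
          rw [← hgy]
        have e0 : A (gmap x) ⟨j, by omega⟩ = y ^ q ^ (s * j) := by
          rw [← hgy]
        calc ∑ i ∈ Finset.range k, a' (j + 1) i * x ^ q ^ (s * i)
            = A (gmap x) ⟨j + 1, hj⟩ := (hAcoordN x (j + 1) hj).symm
          _ = y ^ q ^ (s * (j + 1)) := e1
          _ = (y ^ q ^ (s * j)) ^ q ^ s := by
              rw [← pow_mul, ← pow_add, show s * (j + 1) = s * j + s by ring]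
          _ = (A (gmap x) ⟨j, by omega⟩) ^ q ^ s := by rw [e0]
          _ = (∑ i ∈ Finset.range k, a' j i * x ^ q ^ (s * i)) ^ q ^ s := by
              rw [hAcoordN x j (by omega)]
      have hvan : ∀ x ∈ S, ∑ i ∈ Finset.range (k + 1), cj i * x ^ q ^ (s * i) = 0 := by
        intro x hx
        have hsplit : ∑ i ∈ Finset.range (k + 1), cj i * x ^ q ^ (s * i)
            = (∑ i ∈ Finset.range (k + 1), a' (j + 1) i * x ^ q ^ (s * i))
              - ∑ i ∈ Finset.range (k + 1),
                  (if i = 0 then 0 else (a' j (i - 1)) ^ q ^ s) * x ^ q ^ (s * i) := by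
          rw [← Finset.sum_sub_distrib]
          apply Finset.sum_congr rfl
          intro i _
          rw [hcj]
          ring
        rw [hsplit]
        have h1 : ∑ i ∈ Finset.range (k + 1), a' (j + 1) i * x ^ q ^ (s * i)
            = ∑ i ∈ Finset.range k, a' (j + 1) i * x ^ q ^ (s * i) := by
          rw [Finset.sum_range_succ]
          have hz : a' (j + 1) k = 0 := by
            simp only [ha']
            rw [dif_neg]
            intro hcon
            exact lt_irrefl k hcon.2
          rw [hz, zero_mul, add_zero]
        have h2 : ∑ i ∈ Finset.range (k + 1),
              (if i = 0 then 0 else (a' j (i - 1)) ^ q ^ s) * x ^ q ^ (s * i)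
            = ∑ i ∈ Finset.range k, (a' j i) ^ q ^ s * x ^ q ^ (s * (i + 1)) := by
          rw [Finset.sum_range_succ']
          simp [Nat.add_sub_cancel]
        have h3 : (∑ i ∈ Finset.range k, a' j i * x ^ q ^ (s * i)) ^ q ^ s
            = ∑ i ∈ Finset.range k, (a' j i) ^ q ^ s * x ^ q ^ (s * (i + 1)) := by
          rw [gab_sum_pow hq0 hfa]
          apply Finset.sum_congr rfl
          intro i _
          rw [mul_pow, ← pow_mul, ← pow_add, show s * i + s = s * (i + 1) by ring]
        rw [h1, h2, ← h3, hrel x hx, sub_self]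
      have hkey := gab_keyVanish hq2 hm hs hsm hcardK hcardL hfa hcK k cj S hgt hvan
        (i + 1) (by omega)
      simp only [hcj] at hkey
      rw [if_neg (Nat.succ_ne_zero i), Nat.add_sub_cancel] at hkey
      exact sub_eq_zero.mp hkey
    have hchain : ∀ i : ℕ, 1 ≤ i → i < k → ∀ t : ℕ, t ≤ k - i →
        a' t (i + t) = (a' 0 i) ^ q ^ (s * t) := by
      intro i hi1 hik t
      induction t with
      | zero => intro _; simp
      | succ t iht =>
        intro ht
        rw [show i + (t + 1) = (i + t) + 1 from rfl]
        rw [hstep t (i + t) (by omega) (by omega)]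
        rw [iht (by omega)]
        rw [← pow_mul, ← pow_add, show s * t + s = s * (t + 1) by ring]
    have hzero : ∀ i : ℕ, 1 ≤ i → i < k → a' 0 i = 0 := by
      intro i hi1 hik
      have h := hchain i hi1 hik (k - i) le_rfl
      rw [show i + (k - i) = k by omega] at h
      have hk0 : a' (k - i) k = 0 := by
        simp only [ha']
        rw [dif_neg]
        intro hcon
        exact lt_irrefl k hcon.2
      rw [hk0] at h
      exact (pow_eq_zero_iff (pow_ne_zero _ hq0)).mp h.symm
    have hproj : ∀ x : L, A (gmap x) ⟨0, hk⟩ = a' 0 0 * x := by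
      intro x
      rw [hAcoordN x 0 hk]
      rw [Finset.sum_eq_single_of_mem 0 (Finset.mem_range.mpr hk)
        (fun b hb hbne => by
          rw [hzero b (by omega) (Finset.mem_range.mp hb), zero_mul])]
      norm_num
    have hy0 : ∀ y : L, gmap y ⟨0, hk⟩ = y := by
      intro y
      show y ^ q ^ (s * 0) = y
      norm_num
    have hTeq : (T : Set L) = (fun x => a' 0 0 * x) '' (S : Set L) := by
      ext y
      constructor
      · intro hyT
        have hmem : gmap y ∈ gmap '' (T : Set L) := Set.mem_image_of_mem _ hyT
        rw [← hA] at hmem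
        obtain ⟨w, hw, hw2⟩ := hmem
        obtain ⟨x, hxS, rfl⟩ := hw
        refine ⟨x, hxS, ?_⟩
        have h := hproj x
        rw [hw2, hy0 y] at h
        exact h.symm
      · rintro ⟨x, hxS, rfl⟩
        obtain ⟨y, hyT, hgy⟩ := hgx x hxS
        have h := hproj x
        rw [← hgy, hy0 y] at h
        show a' 0 0 * x ∈ (T : Set L)
        rw [← h]
        exact hyT
    have hα : a' 0 0 ≠ 0 := by
      intro h0
      have hTbot : T = ⊥ := by
        rw [Submodule.eq_bot_iff]
        intro y hy
        have hmem : y ∈ (T : Set L) := hy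
        rw [hTeq] at hmem
        obtain ⟨x, -, rfl⟩ := hmem
        show a' 0 0 * x = 0
        rw [h0, zero_mul]
      rw [hTbot, finrank_bot] at hdim
      omega
    refine ⟨a' 0 0, hα, ?_⟩
    rw [hTeq]
    ext y
    simp only [Set.mem_image, Set.mem_smul_set, smul_eq_mul]
  · -- backward direction
    rintro ⟨α, hα0, hT⟩
    refine ⟨LinearEquiv.piCongrRight
      (fun i : Fin k => LinearEquiv.smulOfNeZero L L (α ^ q ^ (s * (i : ℕ)))
        (pow_ne_zero _ hα0)), ?_⟩
    set A := LinearEquiv.piCongrRight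
      (fun i : Fin k => LinearEquiv.smulOfNeZero L L (α ^ q ^ (s * (i : ℕ)))
        (pow_ne_zero _ hα0)) with hA
    have hAg : ∀ x : L, A (gmap x) = gmap (α * x) := by
      intro x
      funext i
      show (α ^ q ^ (s * (i : ℕ))) • (x ^ q ^ (s * (i : ℕ))) = (α * x) ^ q ^ (s * (i : ℕ))
      rw [smul_eq_mul, mul_pow]
    rw [hgabS, hgabT, Set.image_image]
    have h1 : (fun x => A (gmap x)) '' (S : Set L) = (fun x => gmap (α * x)) '' (S : Set L) := by
      apply Set.image_congr
      intro x _
      exact hAg x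
    have h2 : (α • (S : Set L)) = (fun x => α * x) '' (S : Set L) := by
      ext y
      simp only [Set.mem_smul_set, Set.mem_image, smul_eq_mul]
    rw [h1, hT, h2, Set.image_image]
end

section
/- Let q be a prime power, let m, k, s be positive integers with gcd(s,m)=1 and 1 ≤ k < m, and let G_{k,s,m} = {(x, x^{q^s}, ..., x^{q^{s(k-1)}}) : x ∈ F_{q^m}} ⊆ (F_{q^m})^k. Then an invertible k×k matrix A over F_{q^m} satisfies A·G_{k,s,m} = G_{k,s,m} (multiplying column vectors) if and only if A is the diagonal matrix diag(d, d^{q^s}, d^{q^{2s}}, ..., d^{q^{s(k-1)}}) for some nonzero d ∈ F_{q^m}. In other words, the stabilizer of the Gabidulin system G_{k,s,m} in GL(k, F_{q^m}) is exactly {diag(d, d^{q^s}, ..., d^{q^{s(k-1)}}) : d ∈ F_{q^m}, d ≠ 0}. -/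
section helpers
variable {L : Type*} [Field L] [Fintype L] {q m : ℕ}

/-- Linear independence of Frobenius powers, via the polynomial-roots argument. -/
lemma gab_core (hq2 : 2 ≤ q) (hm : 0 < m) (hcard : Fintype.card L = q ^ m)
    (c : Fin m → L) (h : ∀ x : L, ∑ t, c t * x ^ q ^ (t : ℕ) = 0) :
    ∀ t, c t = 0 := by
  classical
  set P : Polynomial L := ∑ t : Fin m, Polynomial.C (c t) * Polynomial.X ^ (q ^ (t : ℕ)) with hP
  have heval : ∀ x : L, P.eval x = 0 := by
    intro x
    simpa [P, Polynomial.eval_finset_sum] using h x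
  have hdeg : P.natDegree < Fintype.card L := by
    have h1 : P.natDegree ≤ q ^ (m - 1) := by
      apply Polynomial.natDegree_sum_le_of_forall_le
      intro t _
      calc (Polynomial.C (c t) * Polynomial.X ^ (q ^ (t : ℕ))).natDegree
          ≤ (Polynomial.X ^ (q ^ (t : ℕ)) : Polynomial L).natDegree :=
            Polynomial.natDegree_C_mul_le _ _
        _ = q ^ (t : ℕ) := Polynomial.natDegree_X_pow _
        _ ≤ q ^ (m - 1) := Nat.pow_le_pow_right (by omega) (by omega)
    have h2 : q ^ (m - 1) < q ^ m := Nat.pow_lt_pow_right (by omega) (by omega)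
    omega
  have hP0 : P = 0 := by
    apply Polynomial.eq_zero_of_forall_eval_zero_of_natDegree_lt_card P heval
    rw [Cardinal.mk_fintype]
    exact_mod_cast hdeg
  intro t
  have : P.coeff (q ^ (t : ℕ)) = c t := by
    rw [hP, Polynomial.finset_sum_coeff]
    rw [Finset.sum_eq_single t]
    · simp
    · intro t' _ hne
      have : q ^ (t' : ℕ) ≠ q ^ (t : ℕ) := by
        intro he
        exact hne (Fin.ext (Nat.pow_right_injective hq2 he))
      simp only [Polynomial.coeff_C_mul, Polynomial.coeff_X_pow, if_neg (Ne.symm this),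
        mul_zero]
    · simp
  rw [hP0] at this
  simpa using this.symm

/-- Exponent reduction mod `m`. -/
lemma gab_red (hm : 0 < m) (hcard : Fintype.card L = q ^ m) (x : L) (a : ℕ) :
    x ^ q ^ a = x ^ q ^ (a % m) := by
  conv_lhs => rw [← Nat.mod_add_div a m]
  have h1 : q ^ (a % m + m * (a / m)) = q ^ (a % m) * (q ^ m) ^ (a / m) := by
    rw [pow_add, pow_mul]
  rw [h1, pow_mul, ← hcard, FiniteField.pow_card_pow]

/-- Fiberwise version: coefficients of a vanishing linearized polynomial vanish fiberwise. -/
lemma gab_fib (hq2 : 2 ≤ q) (hm : 0 < m) (hcard : Fintype.card L = q ^ m)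
    {ι : Type*} [Fintype ι] [DecidableEq ι] (b : ι → L) (e : ι → ℕ)
    (h : ∀ x : L, ∑ i, b i * x ^ q ^ (e i) = 0) (t : ℕ) :
    ∑ i ∈ Finset.univ.filter (fun i => e i % m = t % m), b i = 0 := by
  classical
  have key := gab_core hq2 hm hcard
    (fun t' : Fin m => ∑ i ∈ Finset.univ.filter (fun i => e i % m = (t' : ℕ)), b i) ?_
    ⟨t % m, Nat.mod_lt _ hm⟩
  · simpa using key
  · intro x
    have hstep : ∀ t' : Fin m,
        (∑ i ∈ Finset.univ.filter (fun i => e i % m = (t' : ℕ)), b i) * x ^ q ^ (t' : ℕ)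
          = ∑ i ∈ Finset.univ.filter
              (fun i => (⟨e i % m, Nat.mod_lt _ hm⟩ : Fin m) = t'), b i * x ^ q ^ (e i) := by
      intro t'
      rw [Finset.sum_mul]
      apply Finset.sum_congr
      · apply Finset.filter_congr
        intro i _
        simp [Fin.ext_iff]
      · intro i hi
        simp only [Finset.mem_filter] at hi
        obtain ⟨-, rfl⟩ := hi
        rw [gab_red hm hcard x (e i)]
    calc ∑ t' : Fin m,
          (∑ i ∈ Finset.univ.filter (fun i => e i % m = (t' : ℕ)), b i) * x ^ q ^ (t' : ℕ)
        = ∑ t' : Fin m, ∑ i ∈ Finset.univ.filter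
            (fun i => (⟨e i % m, Nat.mod_lt _ hm⟩ : Fin m) = t'), b i * x ^ q ^ (e i) :=
          Finset.sum_congr rfl fun t' _ => hstep t'
      _ = ∑ i, b i * x ^ q ^ (e i) :=
          Finset.sum_fiberwise Finset.univ (fun i => (⟨e i % m, Nat.mod_lt _ hm⟩ : Fin m)) _
      _ = 0 := h x

end helpers

/-- the stabilizer of the Gabidulin system `G_{k,s,m}` in `GL(k, F_{q^m})`
consists precisely of the matrices `diag(d, d^{q^s}, …, d^{q^{s(k-1)}})` with `d ≠ 0`. -/
theorem stmt1 (q m k s : ℕ) (hq : IsPrimePow q) (hk : 1 ≤ k) (hkm : k < m) (hs : 0 < s)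
    (hsm : Nat.gcd s m = 1)
    (K L : Type*) [Field K] [Fintype K] [Field L] [Fintype L] [Algebra K L]
    (hcardK : Fintype.card K = q) (hrank : Module.finrank K L = m)
    (A : Matrix (Fin k) (Fin k) L) :
    (IsUnit A ∧
        (fun v => A.mulVec v) '' gabSys q s k (Set.univ : Set L)
          = gabSys q s k (Set.univ : Set L)) ↔
      ∃ d : L, d ≠ 0 ∧ A = Matrix.diagonal (fun i : Fin k => d ^ q ^ (s * (i : ℕ))) := by
  classical
  have hq2 : 2 ≤ q := hq.two_le
  have hm : 0 < m := by omega
  haveI : NeZero k := ⟨by omega⟩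
  have hcardL : Fintype.card L = q ^ m := by
    rw [← hrank, ← hcardK]
    exact Module.card_eq_pow_finrank
  constructor
  · rintro ⟨hA, himg⟩
    -- set up the characteristic
    obtain ⟨p, e, hp', he, hqpe⟩ := hq
    have hp : p.Prime := Nat.prime_iff.mpr hp'
    obtain ⟨n, hpr, hcardL'⟩ := FiniteField.card L (ringChar L)
    have hpp : p = ringChar L := by
      have h1 : p ^ (e * m) = (ringChar L) ^ (n : ℕ) := by
        rw [pow_mul, hqpe, ← hcardL, hcardL']
      have h2 : p ∣ (ringChar L) ^ (n : ℕ) := by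
        rw [← h1]
        exact dvd_pow_self p (by positivity)
      exact (Nat.prime_dvd_prime_iff_eq hp hpr).mp (hp.dvd_of_dvd_pow h2)
    haveI : Fact p.Prime := ⟨hp⟩
    haveI : CharP L p := by rw [hpp]; exact ringChar.charP L
    -- the row equations
    have hrow : ∀ (r : Fin k) (x : L),
        ∑ j, A r j * x ^ q ^ (s * (j : ℕ))
          = (∑ j, A 0 j * x ^ q ^ (s * (j : ℕ))) ^ q ^ (s * (r : ℕ)) := by
      intro r x
      have hmem : A.mulVec (fun i : Fin k => x ^ q ^ (s * (i : ℕ)))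
          ∈ gabSys q s k (Set.univ : Set L) := by
        rw [← himg]
        exact ⟨_, ⟨x, trivial, rfl⟩, rfl⟩
      obtain ⟨y, -, hy⟩ := hmem
      have h0 := congrFun hy (0 : Fin k)
      have hr := congrFun hy r
      simp only [Matrix.mulVec, dotProduct, Fin.val_zero, Nat.mul_zero, pow_zero,
        pow_one] at h0 hr
      rw [← hr, h0]
    -- expanded row equations
    have hrow2 : ∀ (r : Fin k) (x : L),
        ∑ j, A r j * x ^ q ^ (s * (j : ℕ))
          = ∑ j, (A 0 j) ^ q ^ (s * (r : ℕ)) * x ^ q ^ (s * ((j : ℕ) + (r : ℕ))) := by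
      intro r x
      rw [hrow r x]
      have hqe : q ^ (s * (r : ℕ)) = p ^ (e * (s * (r : ℕ))) := by
        conv_rhs => rw [pow_mul, hqpe]
      rw [hqe]
      rw [show (∑ j, A 0 j * x ^ q ^ (s * (j : ℕ))) ^ p ^ (e * (s * (r : ℕ)))
          = iterateFrobenius L p (e * (s * (r : ℕ)))
              (∑ j, A 0 j * x ^ q ^ (s * (j : ℕ))) from rfl]
      rw [map_sum]
      apply Finset.sum_congr rfl
      intro j _
      rw [iterateFrobenius_def, mul_pow, ← hqe, ← pow_mul, ← pow_add, ← Nat.mul_add]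
    -- Step A: the off-diagonal coefficients of row 0 vanish
    have ha0 : ∀ j : Fin k, (j : ℕ) ≠ 0 → A 0 j = 0 := by
      intro j hj
      set r : Fin k := ⟨k - (j : ℕ), by omega⟩ with hrdef
      have hsum : ∀ x : L, ∑ i : Fin k ⊕ Fin k,
          Sum.elim (fun j' : Fin k => A r j')
              (fun j' : Fin k => -((A 0 j') ^ q ^ (s * (r : ℕ)))) i *
            x ^ q ^ (Sum.elim (fun j' : Fin k => s * (j' : ℕ))
              (fun j' : Fin k => s * ((j' : ℕ) + (r : ℕ))) i) = 0 := by
        intro x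
        rw [Fintype.sum_sum_type]
        simp only [Sum.elim_inl, Sum.elim_inr, neg_mul]
        rw [Finset.sum_neg_distrib, hrow2 r x]
        exact add_neg_cancel _
      have hf := gab_fib hq2 hm hcardL _ _ hsum (s * k)
      have hfilter : (Finset.univ.filter (fun i : Fin k ⊕ Fin k =>
          Sum.elim (fun j' : Fin k => s * (j' : ℕ))
            (fun j' : Fin k => s * ((j' : ℕ) + (r : ℕ))) i % m = s * k % m))
          = {Sum.inr j} := by
        ext i
        simp only [Finset.mem_filter, Finset.mem_univ, true_and, Finset.mem_singleton]
        cases i with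
        | inl j' =>
          simp only [Sum.elim_inl]
          constructor
          · intro hE
            exfalso
            have hmod : (j' : ℕ) % m = k % m :=
              Nat.ModEq.cancel_left_of_coprime (by rwa [Nat.gcd_comm]) hE
            rw [Nat.mod_eq_of_lt (lt_trans j'.isLt hkm), Nat.mod_eq_of_lt hkm] at hmod
            have := j'.isLt
            omega
          · intro h
            simp at h
        | inr j'' =>
          simp only [Sum.elim_inr, Sum.inr.injEq]
          have hrval : (r : ℕ) = k - (j : ℕ) := rfl
          have h1 := j''.isLt
          have h3 := j.isLt
          constructor
          · intro hE
            have hmod : ((j'' : ℕ) + (r : ℕ)) % m = k % m :=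
              Nat.ModEq.cancel_left_of_coprime (by rwa [Nat.gcd_comm]) hE
            rw [Nat.mod_eq_of_lt hkm] at hmod
            rcases Nat.lt_or_ge ((j'' : ℕ) + (r : ℕ)) m with hlt | hge
            · rw [Nat.mod_eq_of_lt hlt] at hmod
              exact Fin.ext (by omega)
            · rw [Nat.mod_eq_sub_mod hge, Nat.mod_eq_of_lt (by omega)] at hmod
              omega
          · rintro rfl
            have hjr : (j'' : ℕ) + (r : ℕ) = k := by omega
            rw [hjr]
      rw [hfilter, Finset.sum_singleton] at hf
      simp only [Sum.elim_inr, neg_eq_zero] at hf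
      have hqne : q ^ (s * (r : ℕ)) ≠ 0 := by positivity
      exact (pow_eq_zero_iff hqne).mp hf
    -- Step B: each row is a single Frobenius-twisted multiple
    have hd0 : ∀ (r : Fin k) (x : L),
        ∑ j, A r j * x ^ q ^ (s * (j : ℕ))
          = (A 0 0) ^ q ^ (s * (r : ℕ)) * x ^ q ^ (s * (r : ℕ)) := by
      intro r x
      rw [hrow2 r x, Finset.sum_eq_single (0 : Fin k)]
      · simp [Fin.val_zero]
      · intro j' _ hne
        rw [ha0 j' (fun h => hne (Fin.ext (by rw [h, Fin.val_zero]))),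
          zero_pow (show q ^ (s * (r : ℕ)) ≠ 0 by positivity), zero_mul]
      · intro h
        exact absurd (Finset.mem_univ _) h
    have hentry : ∀ (r j1 : Fin k),
        A r j1 = if j1 = r then (A 0 0) ^ q ^ (s * (r : ℕ)) else 0 := by
      intro r j1
      have hsum : ∀ x : L, ∑ j' : Fin k,
          (A r j' - (if j' = r then (A 0 0) ^ q ^ (s * (r : ℕ)) else 0)) *
            x ^ q ^ (s * (j' : ℕ)) = 0 := by
        intro x
        simp only [sub_mul]
        rw [Finset.sum_sub_distrib, hd0 r x, Finset.sum_eq_single r]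
        · simp
        · intro j' _ hne
          rw [if_neg hne, zero_mul]
        · intro h
          exact absurd (Finset.mem_univ _) h
      have hf := gab_fib hq2 hm hcardL _ _ hsum (s * (j1 : ℕ))
      have hfilter : (Finset.univ.filter
          (fun j' : Fin k => s * (j' : ℕ) % m = s * (j1 : ℕ) % m)) = {j1} := by
        ext j'
        simp only [Finset.mem_filter, Finset.mem_univ, true_and, Finset.mem_singleton]
        constructor
        · intro hE
          have hmod : (j' : ℕ) % m = (j1 : ℕ) % m :=
            Nat.ModEq.cancel_left_of_coprime (by rwa [Nat.gcd_comm]) hE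
          rw [Nat.mod_eq_of_lt (lt_trans j'.isLt hkm),
            Nat.mod_eq_of_lt (lt_trans j1.isLt hkm)] at hmod
          exact Fin.ext hmod
        · rintro rfl
          rfl
      rw [hfilter, Finset.sum_singleton, sub_eq_zero] at hf
      exact hf
    have hAeq : A = Matrix.diagonal (fun i : Fin k => (A 0 0) ^ q ^ (s * (i : ℕ))) := by
      ext i j1
      rw [Matrix.diagonal_apply, hentry i j1]
      by_cases hij : j1 = i
      · subst hij
        simp
      · rw [if_neg hij, if_neg (Ne.symm hij)]
    refine ⟨A 0 0, ?_, hAeq⟩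
    intro h00
    rw [hAeq, Matrix.isUnit_iff_isUnit_det, Matrix.det_diagonal, isUnit_iff_ne_zero] at hA
    exact hA (Finset.prod_eq_zero (Finset.mem_univ (0 : Fin k))
      (by rw [h00]; exact zero_pow (by positivity)))
  · rintro ⟨d, hd, rfl⟩
    constructor
    · rw [Matrix.isUnit_iff_isUnit_det, Matrix.det_diagonal, isUnit_iff_ne_zero]
      exact Finset.prod_ne_zero_iff.mpr fun i _ => pow_ne_zero _ hd
    · ext v
      constructor
      · rintro ⟨w, ⟨x, -, rfl⟩, rfl⟩
        refine ⟨d * x, trivial, ?_⟩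
        funext i
        simp only [Matrix.mulVec_diagonal]
        rw [mul_pow]
      · rintro ⟨x, -, rfl⟩
        refine ⟨fun i => (d⁻¹ * x) ^ q ^ (s * (i : ℕ)), ⟨d⁻¹ * x, trivial, rfl⟩, ?_⟩
        funext i
        simp only [Matrix.mulVec_diagonal]
        rw [← mul_pow, mul_inv_cancel_left₀ hd]
end

section
/- Let q be a prime power and let m, s be positive integers with gcd(s,m)=1. An invertible m×m matrix A over F_{q^m} satisfies A·G_{m,s,m} = G_{m,s,m} if and only if A equals the Dickson matrix D_f of some q^s-polynomial f(x) = a_0 x + a_1 x^{q^s} + ... + a_{m-1} x^{q^{s(m-1)}} with coefficients a_i ∈ F_{q^m} such that the induced map x ↦ f(x) is a bijection of F_{q^m}. That is, the stabilizer of G_{m,s,m} in GL(m, F_{q^m}) is exactly the set of Dickson matrices of invertible q^s-linearized polynomials. -/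
/-- The Dickson matrix of the `q^s`-polynomial with coefficient vector `a`:
its `(i,j)` entry is `a_{(j-i) mod m}^{q^{si}}`. -/
def dicksonMatrix (q s m : ℕ) {L : Type*} [Field L] (a : Fin m → L) :
    Matrix (Fin m) (Fin m) L :=
  Matrix.of fun i j : Fin m => (a (j - i)) ^ q ^ (s * (i : ℕ))

/-- The `F_q`-linear map of `F_{q^m}` induced by the `q^s`-polynomial with
coefficient vector `a`, namely `x ↦ ∑ a_i x^{q^{si}}`. -/
def qPolyMap (q s m : ℕ) {L : Type*} [Field L] (a : Fin m → L) : L → L :=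
  fun x => ∑ i : Fin m, a i * x ^ q ^ (s * (i : ℕ))

section Aux

variable {q s m : ℕ} {L : Type*} [Field L]

private lemma pow_q_mul_m [Fintype L] (hcardL : Fintype.card L = q ^ m) (x : L) (t : ℕ) :
    x ^ q ^ (m * t) = x := by
  induction t with
  | zero => simp
  | succ t ih =>
    rw [Nat.mul_succ, pow_add, pow_mul, ih, ← hcardL, FiniteField.pow_card]

private lemma pow_q_mod [Fintype L] (hcardL : Fintype.card L = q ^ m) (x : L) (a : ℕ) :
    x ^ q ^ a = x ^ q ^ (a % m) := by
  conv_lhs => rw [← Nat.div_add_mod a m]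
  rw [pow_add, pow_mul, pow_q_mul_m hcardL]

private lemma dedekind [Fintype L] (hq2 : 2 ≤ q) (hm : 0 < m) (hsm : Nat.gcd s m = 1)
    (hcardL : Fintype.card L = q ^ m)
    (d : Fin m → L) (hd : ∀ x : L, ∑ i : Fin m, d i * x ^ q ^ (s * (i : ℕ)) = 0) :
    d = 0 := by
  set F : Fin m → (L →* L) := fun i => powMonoidHom (q ^ (s * (i : ℕ))) with hF
  have hFinj : Function.Injective F := by
    intro i j hij
    rcases eq_or_lt_of_le (show 1 ≤ m from hm) with h1 | h2
    · -- m = 1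
      have : Subsingleton (Fin m) := by rw [← h1]; infer_instance
      exact Subsingleton.elim i j
    · -- 2 ≤ m
      obtain ⟨g, hg⟩ := IsCyclic.exists_generator (α := Lˣ)
      have horder : orderOf g = q ^ m - 1 := by
        rw [orderOf_eq_card_of_forall_mem_zpowers hg, Nat.card_units,
          Nat.card_eq_fintype_card, hcardL]
      have hgeq : (g : L) ^ q ^ (s * (i : ℕ)) = (g : L) ^ q ^ (s * (j : ℕ)) := by
        simpa [hF, powMonoidHom] using DFunLike.congr_fun hij (g : L)
      have hgeq' : g ^ q ^ (s * (i : ℕ)) = g ^ q ^ (s * (j : ℕ)) := by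
        ext
        simpa [Units.val_pow_eq_pow_val] using hgeq
      have hmod : q ^ (s * (i : ℕ)) ≡ q ^ (s * (j : ℕ)) [MOD q ^ m - 1] := by
        rw [← horder]; exact pow_eq_pow_iff_modEq.mp hgeq'
      have hqm1 : 1 ≤ q ^ m := Nat.one_le_pow _ _ (by omega)
      have hone : (1 : ℕ) ≡ q ^ m [MOD q ^ m - 1] := (Nat.modEq_iff_dvd' hqm1).mpr dvd_rfl
      have hmodq : ∀ a : ℕ, q ^ a ≡ q ^ (a % m) [MOD q ^ m - 1] := by
        intro a
        conv_lhs => rw [← Nat.div_add_mod a m]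
        rw [pow_add, pow_mul]
        calc (q ^ m) ^ (a / m) * q ^ (a % m)
            ≡ 1 ^ (a / m) * q ^ (a % m) [MOD q ^ m - 1] :=
              Nat.ModEq.mul_right _ ((hone.symm).pow _)
          _ = q ^ (a % m) := by rw [one_pow, one_mul]
      have h2' : q ^ (s * (i : ℕ) % m) ≡ q ^ (s * (j : ℕ) % m) [MOD q ^ m - 1] :=
        ((hmodq _).symm.trans hmod).trans (hmodq _)
      have key : ∀ a : ℕ, q ^ (a % m) < q ^ m - 1 := by
        intro a
        have hmlt : a % m < m := Nat.mod_lt a (by omega)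
        have hle : q ^ (a % m) ≤ q ^ (m - 1) :=
          Nat.pow_le_pow_right (by omega) (by omega)
        have h2q : q ^ (m - 1) * 2 ≤ q ^ (m - 1) * q := Nat.mul_le_mul_left _ hq2
        have h3 : q ^ (m - 1) * q = q ^ m := by
          rw [← pow_succ]; congr 1; omega
        have h4 : 2 ≤ q ^ (m - 1) := le_trans hq2 (Nat.le_self_pow (by omega) q)
        omega
      have heq : q ^ (s * (i : ℕ) % m) = q ^ (s * (j : ℕ) % m) := by
        have h := h2'
        unfold Nat.ModEq at h
        rwa [Nat.mod_eq_of_lt (key _), Nat.mod_eq_of_lt (key _)] at h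
      have hexp : s * (i : ℕ) ≡ s * (j : ℕ) [MOD m] := Nat.pow_right_injective hq2 heq
      have hij' : (i : ℕ) ≡ (j : ℕ) [MOD m] :=
        Nat.ModEq.cancel_left_of_coprime (by rwa [Nat.gcd_comm]) hexp
      have : (i : ℕ) = (j : ℕ) := by
        have h := hij'
        unfold Nat.ModEq at h
        rwa [Nat.mod_eq_of_lt i.isLt, Nat.mod_eq_of_lt j.isLt] at h
      exact Fin.ext this
  have hli : LinearIndependent L (fun i : Fin m => ⇑(F i)) :=
    (linearIndependent_monoidHom L L).comp F hFinj
  have hz : ∀ i, d i = 0 := by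
    apply Fintype.linearIndependent_iff.mp hli d
    funext x
    simpa [hF, powMonoidHom, Finset.sum_apply] using hd x
  funext i
  exact hz i

private def qLin (q s : ℕ) {m : ℕ} (K : Type*) {L : Type*} [Field K] [Field L] [Algebra K L]
    (hsc : ∀ (k : K) (t : ℕ), k ^ q ^ t = k)
    (hadd : ∀ (t : ℕ) (x y : L), (x + y) ^ q ^ t = x ^ q ^ t + y ^ q ^ t)
    (a : Fin m → L) : L →ₗ[K] L where
  toFun x := ∑ i : Fin m, a i * x ^ q ^ (s * (i : ℕ))
  map_add' x y := by
    rw [← Finset.sum_add_distrib]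
    exact Finset.sum_congr rfl fun i _ => by rw [hadd, mul_add]
  map_smul' k x := by
    simp only [RingHom.id_apply, Finset.smul_sum]
    refine Finset.sum_congr rfl fun i _ => ?_
    simp only [Algebra.smul_def, mul_pow, ← map_pow, hsc]
    ring

private lemma moore_isUnit {K : Type*} [Field K] [Fintype L] [Algebra K L]
    (hsc : ∀ (k : K) (t : ℕ), k ^ q ^ t = k)
    (hadd : ∀ (t : ℕ) (x y : L), (x + y) ^ q ^ t = x ^ q ^ t + y ^ q ^ t)
    (hded : ∀ d : Fin m → L,
      (∀ x : L, ∑ i : Fin m, d i * x ^ q ^ (s * (i : ℕ)) = 0) → d = 0)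
    (c : Fin m → L) (hspan : Submodule.span K (Set.range c) = ⊤) :
    IsUnit (Matrix.of fun i j : Fin m => (c j) ^ q ^ (s * (i : ℕ))) := by
  set M : Matrix (Fin m) (Fin m) L := Matrix.of fun i j : Fin m => (c j) ^ q ^ (s * (i : ℕ))
    with hM
  rw [Matrix.isUnit_iff_isUnit_det, isUnit_iff_ne_zero]
  intro hdet
  have hdetT : (Matrix.transpose M).det = 0 := by rw [Matrix.det_transpose]; exact hdet
  obtain ⟨d, hd0, hd⟩ := (Matrix.exists_mulVec_eq_zero_iff).mpr hdetT
  apply hd0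
  apply hded
  intro x
  have hG : (qLin q s K hsc hadd d) = (0 : L →ₗ[K] L) := by
    apply LinearMap.ext_on hspan
    rintro y ⟨j, rfl⟩
    have h := congrFun hd j
    simp only [Matrix.mulVec, dotProduct, Matrix.transpose_apply, Matrix.of_apply,
      Pi.zero_apply, hM] at h
    show ∑ i : Fin m, d i * (c j) ^ q ^ (s * (i : ℕ)) = 0
    rw [← h]
    exact Finset.sum_congr rfl fun i _ => mul_comm _ _
  have := DFunLike.congr_fun hG x
  simpa [qLin] using this

private lemma span_of_unit_cols {m : ℕ} {L : Type*} [Field L] (M : Matrix (Fin m) (Fin m) L)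
    (hM : IsUnit M) (S : Set (Fin m → L)) (hcol : ∀ j, (fun i => M i j) ∈ S) :
    Submodule.span L S = ⊤ := by
  rw [eq_top_iff]
  rintro w -
  have hw : w = M.mulVec (M⁻¹.mulVec w) := by
    rw [Matrix.mulVec_mulVec, Matrix.mul_nonsing_inv _ ((Matrix.isUnit_iff_isUnit_det M).mp hM),
      Matrix.one_mulVec]
  rw [hw]
  have hrepr : ∀ c : Fin m → L, M.mulVec c = ∑ j : Fin m, c j • (fun i => M i j) := by
    intro c
    funext i
    simp only [Matrix.mulVec, dotProduct, Finset.sum_apply, Pi.smul_apply,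
      smul_eq_mul]
    exact Finset.sum_congr rfl fun j _ => mul_comm _ _
  rw [hrepr]
  exact Submodule.sum_mem _ fun j _ =>
    Submodule.smul_mem _ _ (Submodule.subset_span (hcol j))

private lemma dickson_mulVec [Fintype L]
    (hm : 0 < m) (hcardL : Fintype.card L = q ^ m)
    (hsum : ∀ (t : ℕ) (f : Fin m → L), (∑ i : Fin m, f i) ^ q ^ t = ∑ i : Fin m, (f i) ^ q ^ t)
    (a : Fin m → L) (x : L) :
    (dicksonMatrix q s m a).mulVec (fun i : Fin m => x ^ q ^ (s * (i : ℕ)))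
      = fun i : Fin m => (qPolyMap q s m a x) ^ q ^ (s * (i : ℕ)) := by
  haveI : NeZero m := ⟨hm.ne'⟩
  funext i
  show ∑ j : Fin m, (a (j - i)) ^ q ^ (s * (i : ℕ)) * x ^ q ^ (s * (j : ℕ)) = _
  have hrhs : (qPolyMap q s m a x) ^ q ^ (s * (i : ℕ))
      = ∑ j : Fin m, (a j) ^ q ^ (s * (i : ℕ)) * x ^ q ^ (s * ((i : ℕ) + (j : ℕ)) % m) := by
    rw [qPolyMap, hsum]
    refine Finset.sum_congr rfl fun j _ => ?_
    rw [mul_pow, ← pow_mul, ← pow_add]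
    rw [show s * (j : ℕ) + s * (i : ℕ) = s * ((i : ℕ) + (j : ℕ)) by ring]
    rw [pow_q_mod hcardL x]
  rw [hrhs]
  refine (Fintype.sum_equiv (Equiv.addLeft i) _ _ fun j => ?_).symm
  have h1 : (Equiv.addLeft i j : Fin m) - i = j := by
    simp [Equiv.addLeft]
  have h2 : x ^ q ^ (s * ((Equiv.addLeft i j : Fin m) : ℕ))
      = x ^ q ^ (s * ((i : ℕ) + (j : ℕ)) % m) := by
    have hval : ((Equiv.addLeft i j : Fin m) : ℕ) = ((i : ℕ) + (j : ℕ)) % m := by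
      simp [Equiv.addLeft, Fin.add_def]
    rw [pow_q_mod hcardL, hval]
    exact congrArg (fun e => x ^ q ^ e)
      ((Nat.ModEq.mul_left s (Nat.mod_modEq ((i : ℕ) + (j : ℕ)) m)) : _ = _)
  rw [h1, h2]

end Aux

/-- the stabilizer of `G_{m,s,m}` in `GL(m, F_{q^m})` consists exactly of
the Dickson matrices of invertible `q^s`-linearized polynomials. -/
theorem stmt2 (q m s : ℕ) (hq : IsPrimePow q) (hm : 0 < m) (hs : 0 < s)
    (hsm : Nat.gcd s m = 1)
    (K L : Type*) [Field K] [Fintype K] [Field L] [Fintype L] [Algebra K L]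
    (hcardK : Fintype.card K = q) (hrank : Module.finrank K L = m)
    (A : Matrix (Fin m) (Fin m) L) :
    (IsUnit A ∧
        (fun v => A.mulVec v) '' gabSys q s m (Set.univ : Set L)
          = gabSys q s m (Set.univ : Set L)) ↔
      ∃ a : Fin m → L, Function.Bijective (qPolyMap q s m a) ∧ A = dicksonMatrix q s m a := by
  haveI : NeZero m := ⟨hm.ne'⟩
  classical
  -- characteristic setup
  obtain ⟨p, n, hp, hn, hpn⟩ := hq
  have hpp : p.Prime := Nat.prime_iff.mpr hp
  haveI : Fact p.Prime := ⟨hpp⟩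
  have hcharK : CharP K p := by
    obtain ⟨k, hkprime, hkcard⟩ := FiniteField.card K (ringChar K)
    have hdvd : p ∣ ringChar K ^ (k : ℕ) := by
      rw [← hkcard, hcardK, ← hpn]
      exact dvd_pow_self p hn.ne'
    have : p ∣ ringChar K := hpp.dvd_of_dvd_pow hdvd
    have hpeq : p = ringChar K := ((Nat.prime_dvd_prime_iff_eq hpp hkprime).mp this)
    rw [hpeq]
    exact ringChar.charP K
  haveI : CharP K p := hcharK
  haveI hcharL : CharP L p := charP_of_injective_algebraMap (algebraMap K L).injective p
  have hq2 : 2 ≤ q := by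
    rw [← hpn]
    calc 2 ≤ p := hpp.two_le
      _ = p ^ 1 := (pow_one p).symm
      _ ≤ p ^ n := Nat.pow_le_pow_right hpp.pos hn
  -- cardinality of L
  have hcardL : Fintype.card L = q ^ m := by
    rw [← hcardK, ← hrank]
    exact Module.card_eq_pow_finrank
  -- basic frobenius facts
  have hadd : ∀ (t : ℕ) (x y : L), (x + y) ^ q ^ t = x ^ q ^ t + y ^ q ^ t := by
    intro t x y
    rw [← hpn, ← pow_mul]
    exact add_pow_char_pow ..
  have hsum : ∀ (t : ℕ) (f : Fin m → L),
      (∑ i : Fin m, f i) ^ q ^ t = ∑ i : Fin m, (f i) ^ q ^ t := by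
    intro t f
    have hqt : q ^ t = p ^ (n * t) := by rw [← hpn, pow_mul]
    rw [hqt]
    have h := map_sum (iterateFrobenius L p (n * t)) f Finset.univ
    simp only [iterateFrobenius_def] at h
    exact h
  have hsc : ∀ (k : K) (t : ℕ), k ^ q ^ t = k := by
    intro k t
    induction t with
    | zero => simp
    | succ t ih => rw [pow_succ, pow_mul, ih, ← hcardK, FiniteField.pow_card]
  have hded := dedekind (s := s) hq2 hm hsm hcardL
  -- the Gabidulin vectors and their span
  set vmap : L → (Fin m → L) := fun x => fun i : Fin m => x ^ q ^ (s * (i : ℕ)) with hvmap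
  have hgab : gabSys q s m (Set.univ : Set L) = Set.range vmap := Set.image_univ
  haveI : Module.Finite K L := Module.Finite.of_finite
  let b : Module.Basis (Fin m) K L := Module.finBasisOfFinrankEq K L hrank
  set MA : Matrix (Fin m) (Fin m) L :=
    Matrix.of (fun i j : Fin m => (b j) ^ q ^ (s * (i : ℕ))) with hMA
  have hMAunit : IsUnit MA := moore_isUnit hsc hadd hded b b.span_eq
  have hspanL : Submodule.span L (Set.range vmap) = ⊤ :=
    span_of_unit_cols MA hMAunit _ (fun j => ⟨b j, rfl⟩)
  have hv0 : ∀ x : L, vmap x 0 = x := by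
    intro x
    simp [hvmap]
  constructor
  · -- forward: stabilizer element is a Dickson matrix
    rintro ⟨hu, himg⟩
    rw [hgab] at himg
    set a : Fin m → L := A 0 with ha
    set g : L → L := fun x => (A.mulVec (vmap x)) 0 with hgdef
    have hvg : ∀ x : L, A.mulVec (vmap x) = vmap (g x) := by
      intro x
      have hmem : A.mulVec (vmap x) ∈ Set.range vmap := by
        rw [← himg]
        exact ⟨vmap x, ⟨x, rfl⟩, rfl⟩
      obtain ⟨y, hy⟩ := hmem
      have h0 := congrFun hy 0
      rw [hv0] at h0
      rw [← hy]
      exact congrArg vmap h0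
    have hgq : g = qPolyMap q s m a := by
      funext x
      rw [hgdef]
      simp only [Matrix.mulVec, dotProduct, qPolyMap, ha, hvmap]
    have hgsurj : Function.Surjective g := by
      intro y
      have hmem : vmap y ∈ (fun w => A.mulVec w) '' Set.range vmap := by
        rw [himg]; exact ⟨y, rfl⟩
      obtain ⟨w, ⟨x, rfl⟩, hw⟩ := hmem
      refine ⟨x, ?_⟩
      have hw' : A.mulVec (vmap x) = vmap y := hw
      have h2 : vmap (g x) = vmap y := by rw [← hvg x, hw']
      have h3 := congrFun h2 0
      rwa [hv0, hv0] at h3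
    have hgbij : Function.Bijective g :=
      ⟨Finite.injective_iff_surjective.mpr hgsurj, hgsurj⟩
    refine ⟨a, by rwa [← hgq], ?_⟩
    have hkey := dickson_mulVec (s := s) hm hcardL hsum a
    have htl : Matrix.toLin' A = Matrix.toLin' (dicksonMatrix q s m a) := by
      apply LinearMap.ext_on hspanL
      rintro w ⟨x, rfl⟩
      rw [Matrix.toLin'_apply, Matrix.toLin'_apply, hkey x, hvg x, hgq]
    exact Matrix.toLin'.injective htl
  · -- backward: Dickson matrix of a bijective polynomial stabilizes
    rintro ⟨a, hbij, rfl⟩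
    have hkey := dickson_mulVec (s := s) hm hcardL hsum a
    constructor
    · -- IsUnit
      let F : L →ₗ[K] L := qLin q s K hsc hadd a
      have hFcoe : ⇑F = qPolyMap q s m a := rfl
      have hFbij : Function.Bijective F := by rw [hFcoe]; exact hbij
      let e : L ≃ₗ[K] L := LinearEquiv.ofBijective F hFbij
      let b2 : Module.Basis (Fin m) K L := b.map e
      set MB : Matrix (Fin m) (Fin m) L :=
        Matrix.of (fun i j : Fin m => (b2 j) ^ q ^ (s * (i : ℕ))) with hMB
      have hMBunit : IsUnit MB := moore_isUnit hsc hadd hded b2 b2.span_eq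
      have hprod : dicksonMatrix q s m a * MA = MB := by
        ext i j
        rw [Matrix.mul_apply]
        have h := congrFun (hkey (b j)) i
        simp only [Matrix.mulVec, dotProduct] at h
        rw [hMA, hMB]
        simp only [Matrix.of_apply]
        have hb2 : b2 j = qPolyMap q s m a (b j) := by
          simp only [b2, Module.Basis.map_apply]
          rfl
        rw [hb2, ← h]
      rw [Matrix.isUnit_iff_isUnit_det, isUnit_iff_ne_zero]
      have hdet := congrArg Matrix.det hprod
      rw [Matrix.det_mul] at hdet
      have hA0 : MA.det ≠ 0 := by
        rw [← isUnit_iff_ne_zero, ← Matrix.isUnit_iff_isUnit_det]; exact hMAunit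
      have hB0 : MB.det ≠ 0 := by
        rw [← isUnit_iff_ne_zero, ← Matrix.isUnit_iff_isUnit_det]; exact hMBunit
      intro h0
      rw [h0, zero_mul] at hdet
      exact hB0 hdet.symm
    · -- image
      rw [hgab]
      ext w
      constructor
      · rintro ⟨w', ⟨x, rfl⟩, rfl⟩
        exact ⟨qPolyMap q s m a x, (hkey x).symm⟩
      · rintro ⟨y, rfl⟩
        obtain ⟨x, rfl⟩ := hbij.2 y
        exact ⟨vmap x, ⟨x, rfl⟩, hkey x⟩
end
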